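/- Let (X,T) and (Y,S) be minimal systems and let φ : (X',T) → (X,T) be a proximal extension with (X',T) minimal. If X is quasi-disjoint from Y, then X' is quasi-disjoint from Y. -/

import Mathlib

open Filter Topology Set

/-- A map between topological spaces is *semiopen* if the image of every
nonempty open set has nonempty interior. -/
def SemiOpen {X Y : Type*} [TopologicalSpace X] [TopologicalSpace Y] (f : X → Y) : Prop :=
  ∀ U : Set X, IsOpen U → U.Nonempty → (interior (f '' U)).Nonempty

/-- The `n`-th iterate (`n : ℤ`) of a homeomorphism. -/
def zIter {X : Type*} [TopologicalSpace X] (T : X ≃ₜ X) (n : ℤ) : X → X :=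
  fun x => (T.toEquiv ^ n) x

/-- The two-sided orbit of a point under a homeomorphism. -/
def zOrbit {X : Type*} [TopologicalSpace X] (T : X ≃ₜ X) (x : X) : Set X :=
  Set.range fun n : ℤ => zIter T n x

/-- A system is minimal if every orbit is dense. -/
def IsMinimalSystem {X : Type*} [TopologicalSpace X] (T : X ≃ₜ X) : Prop :=
  ∀ x : X, Dense (zOrbit T x)

/-- A minimal subset: nonempty, closed, invariant, with no proper nonempty
closed invariant subset. -/
def IsMinimalSubset {X : Type*} [TopologicalSpace X] (T : X ≃ₜ X) (M : Set X) : Prop :=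
  M.Nonempty ∧ IsClosed M ∧ T '' M = M ∧
    ∀ M' ⊆ M, M'.Nonempty → IsClosed M' → T '' M' = M' → M' = M

/-- A factor map between systems. -/
def IsFactorMap {X Y : Type*} [TopologicalSpace X] [TopologicalSpace Y]
    (T : X ≃ₜ X) (S : Y ≃ₜ Y) (f : X → Y) : Prop :=
  Continuous f ∧ Function.Surjective f ∧ ∀ x, f (T x) = S (f x)

/-- The regionally proximal relation. -/
def RP {X : Type*} [MetricSpace X] (T : X ≃ₜ X) : Set (X × X) :=
  {p | ∃ (u v : ℕ → X) (n : ℕ → ℤ),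
    Tendsto u atTop (𝓝 p.1) ∧ Tendsto v atTop (𝓝 p.2) ∧
    Tendsto (fun i => dist (zIter T (n i) (u i)) (zIter T (n i) (v i))) atTop (𝓝 0)}

/-- A joining of two systems: a closed invariant subset of the product with
full projections onto both coordinates. -/
def IsJoining {X Y : Type*} [TopologicalSpace X] [TopologicalSpace Y]
    (T : X ≃ₜ X) (S : Y ≃ₜ Y) (J : Set (X × Y)) : Prop :=
  IsClosed J ∧ (T.prodCongr S) '' J = J ∧
    Prod.fst '' J = Set.univ ∧ Prod.snd '' J = Set.univ

/-- `J` projects onto `X_eq × Y_eq`: phrased via the regionally proximal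
relation, every product of RP-cells meets `J`. -/
def FullEqProjection {X Y : Type*} [MetricSpace X] [MetricSpace Y]
    (T : X ≃ₜ X) (S : Y ≃ₜ Y) (J : Set (X × Y)) : Prop :=
  ∀ x : X, ∀ y : Y, ∃ p ∈ J, (x, p.1) ∈ RP T ∧ (y, p.2) ∈ RP S

/-- Two minimal systems are quasi-disjoint if the full product is the only
joining projecting onto the product of the maximal equicontinuous factors. -/
def QuasiDisjoint {X Y : Type*} [MetricSpace X] [MetricSpace Y]
    (T : X ≃ₜ X) (S : Y ≃ₜ Y) : Prop :=
  ∀ J : Set (X × Y), IsJoining T S J → FullEqProjection T S J → J = Set.univ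

/-- Two systems are disjoint if the full product is the only joining. -/
def DisjointSystems {X Y : Type*} [TopologicalSpace X] [TopologicalSpace Y]
    (T : X ≃ₜ X) (S : Y ≃ₜ Y) : Prop :=
  ∀ J : Set (X × Y), IsJoining T S J → J = Set.univ

/-- A system is equicontinuous (with respect to all integer iterates). -/
def EquicontinuousSystem {X : Type*} [MetricSpace X] (T : X ≃ₜ X) : Prop :=
  ∀ ε > (0 : ℝ), ∃ δ > (0 : ℝ), ∀ x₁ x₂ : X, dist x₁ x₂ < δ →
    ∀ n : ℤ, dist (zIter T n x₁) (zIter T n x₂) < ε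

/-- A pair of points is proximal. -/
def ProximalPair {X : Type*} [MetricSpace X] (T : X ≃ₜ X) (x₁ x₂ : X) : Prop :=
  ∀ ε > (0 : ℝ), ∃ n : ℤ, dist (zIter T n x₁) (zIter T n x₂) < ε

section Aux
variable {X : Type*} [TopologicalSpace X] (T : X ≃ₜ X)

lemma zIter_zero (x : X) : zIter T 0 x = x := rfl

lemma zIter_one_add (n : ℤ) (x : X) : zIter T (1 + n) x = T (zIter T n x) := by
  simp [zIter, zpow_add, zpow_one]

lemma zIter_neg_one_add (n : ℤ) (x : X) : zIter T (-1 + n) x = T.symm (zIter T n x) := by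
  simp [zIter, zpow_add, zpow_neg, zpow_one]

lemma zIter_continuous (n : ℤ) : Continuous (zIter T n) := by
  induction n using Int.induction_on with
  | zero => exact continuous_id
  | succ k ih =>
      have : zIter T (k + 1) = T ∘ zIter T k := by
        funext x; rw [add_comm, zIter_one_add]; rfl
      rw [this]; exact T.continuous.comp ih
  | pred k ih =>
      have : zIter T (-k - 1) = T.symm ∘ zIter T (-k) := by
        funext x
        have h : (-(k:ℤ) - 1) = -1 + (-(k:ℤ)) := by ring
        rw [h, zIter_neg_one_add]; rfl
      rw [this]; exact T.symm.continuous.comp ih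

lemma zIter_add_one (n : ℤ) (x : X) : zIter T (n + 1) x = zIter T n (T x) := by
  simp [zIter, zpow_add, zpow_one]

lemma zIter_comm (n : ℤ) (x : X) : zIter T n (T x) = T (zIter T n x) := by
  rw [← zIter_add_one, add_comm, zIter_one_add]

lemma zIter_mem_of_closed_inv {M : Set X} (hM : T '' M = M) {x : X} (hx : x ∈ M)
    (n : ℤ) : zIter T n x ∈ M := by
  have hfwd : ∀ y ∈ M, T y ∈ M := fun y hy => hM ▸ ⟨y, hy, rfl⟩
  have hbwd : ∀ y ∈ M, T.symm y ∈ M := by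
    intro y hy
    rw [← hM] at hy
    obtain ⟨z, hz, rfl⟩ := hy
    simpa using hz
  induction n using Int.induction_on with
  | zero => simpa [zIter_zero] using hx
  | succ k ih => rw [add_comm, zIter_one_add]; exact hfwd _ ih
  | pred k ih =>
      have h : (-(k:ℤ) - 1) = -1 + (-(k:ℤ)) := by ring
      rw [h, zIter_neg_one_add]; exact hbwd _ ih

lemma mem_zOrbit_self (x : X) : x ∈ zOrbit T x := ⟨0, rfl⟩

lemma image_zOrbit (x : X) : T '' zOrbit T x = zOrbit T x := by
  ext y
  constructor
  · rintro ⟨z, ⟨n, rfl⟩, rfl⟩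
    exact ⟨n + 1, by show zIter T (n + 1) x = _; rw [add_comm, zIter_one_add]⟩
  · rintro ⟨n, rfl⟩
    refine ⟨zIter T (-1 + n) x, ⟨-1 + n, rfl⟩, ?_⟩
    show T (zIter T (-1 + n) x) = zIter T n x
    rw [zIter_neg_one_add]; simp

lemma image_closure_zOrbit (x : X) :
    T '' closure (zOrbit T x) = closure (zOrbit T x) := by
  rw [Homeomorph.image_closure, image_zOrbit]

lemma zOrbit_subset_of_inv {M : Set X} (hcl : IsClosed M) (hM : T '' M = M)
    {x : X} (hx : x ∈ M) : closure (zOrbit T x) ⊆ M := by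
  apply hcl.closure_subset_iff.mpr
  rintro y ⟨n, rfl⟩
  exact zIter_mem_of_closed_inv T hM hx n

/-- Existence of a minimal subset (Zorn). -/
lemma exists_minimal_subset {Z : Type*} [TopologicalSpace Z] [CompactSpace Z]
    [T2Space Z] [Nonempty Z] (R : Z ≃ₜ Z) : ∃ M, IsMinimalSubset R M := by
  set 𝒮 : Set (Set Z) := {M | M.Nonempty ∧ IsClosed M ∧ R '' M = M} with h𝒮
  have huniv : (Set.univ : Set Z) ∈ 𝒮 :=
    ⟨univ_nonempty, isClosed_univ, by simp [Set.image_univ, R.surjective.range_eq]⟩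
  have hZorn : ∀ c ⊆ 𝒮, IsChain (· ⊆ ·) c → c.Nonempty →
      ∃ lb ∈ 𝒮, ∀ s ∈ c, lb ⊆ s := by
    intro c hc hchain hne
    refine ⟨⋂₀ c, ⟨?_, ?_, ?_⟩, fun s hs => sInter_subset_of_mem hs⟩
    · -- nonempty
      have : Nonempty c := hne.to_subtype
      rw [sInter_eq_iInter]
      apply IsCompact.nonempty_iInter_of_directed_nonempty_isCompact_isClosed
      · intro s t
        rcases hchain.total s.2 t.2 with h | h
        · exact ⟨s, subset_rfl, h⟩
        · exact ⟨t, h, subset_rfl⟩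
      · exact fun s => (hc s.2).1
      · exact fun s => (hc s.2).2.1.isCompact
      · exact fun s => (hc s.2).2.1
    · exact isClosed_sInter fun s hs => (hc hs).2.1
    · have : Nonempty c := hne.to_subtype
      rw [sInter_eq_iInter, Set.image_iInter R.bijective]
      exact iInter_congr fun s => (hc s.2).2.2
  obtain ⟨M, -, hmin⟩ := zorn_superset_nonempty 𝒮 hZorn _ huniv
  obtain ⟨hM1, hM2, hM3⟩ := hmin.prop
  refine ⟨M, hM1, hM2, hM3, fun M' hsub hne hcl hinv => ?_⟩
  exact hmin.eq_of_le (show M' ∈ 𝒮 from ⟨hne, hcl, hinv⟩) hsub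

/-- In a minimal subset, every orbit closure is the whole subset. -/
lemma closure_zOrbit_eq_of_minimal {Z : Type*} [TopologicalSpace Z] (R : Z ≃ₜ Z)
    {M : Set Z} (hM : IsMinimalSubset R M) {z : Z} (hz : z ∈ M) :
    closure (zOrbit R z) = M := by
  apply hM.2.2.2
  · exact zOrbit_subset_of_inv R hM.2.1 hM.2.2.1 hz
  · exact ⟨z, subset_closure (mem_zOrbit_self R z)⟩
  · exact isClosed_closure
  · exact image_closure_zOrbit R z

/-- Image of a minimal subset under a commuting homeomorphism is minimal. -/
lemma minimal_image {Z : Type*} [TopologicalSpace Z] [CompactSpace Z] [T2Space Z]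
    (R : Z ≃ₜ Z) (g : Z ≃ₜ Z) (hcomm : ∀ z, g (R z) = R (g z))
    {M : Set Z} (hM : IsMinimalSubset R M) : IsMinimalSubset R (g '' M) := by
  have hcomm' : ∀ s : Set Z, R '' (g '' s) = g '' (R '' s) := by
    intro s
    rw [← Set.image_comp, ← Set.image_comp]
    exact Set.image_congr fun z _ => (hcomm z).symm
  refine ⟨hM.1.image g, (hM.2.1.isCompact.image g.continuous).isClosed, ?_, ?_⟩
  · rw [hcomm', hM.2.2.1]
  · intro M' hsub hne hcl hinv
    have hsub' : g.symm '' M' ⊆ M := by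
      intro z hz
      obtain ⟨w, hw, rfl⟩ := hz
      obtain ⟨m, hm, rfl⟩ := hsub hw
      simpa using hm
    have hcomm'' : ∀ s : Set Z, R '' (g.symm '' s) = g.symm '' (R '' s) := by
      intro s
      rw [← Set.image_comp, ← Set.image_comp]
      apply Set.image_congr
      intro z _
      simp only [Function.comp]
      apply g.injective
      rw [hcomm, g.apply_symm_apply, g.apply_symm_apply]
    have := hM.2.2.2 (g.symm '' M') hsub' (hne.image _)
      ((hcl.isCompact.image g.symm.continuous).isClosed)
      (by rw [hcomm'', hinv])
    have h2 : g '' (g.symm '' M') = M' := by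
      rw [← Set.image_comp]
      simp [Function.comp]
    rw [← h2, this]

end Aux


/-- zIter as a homeomorphism. -/
def zIterHomeo {X : Type*} [TopologicalSpace X] (T : X ≃ₜ X) (n : ℤ) : X ≃ₜ X where
  toEquiv := T.toEquiv ^ n
  continuous_toFun := zIter_continuous T n
  continuous_invFun := by
    have h : ((T.toEquiv ^ n).symm : X → X) = zIter T (-n) := by
      funext x
      show ((T.toEquiv ^ n)⁻¹ : Equiv.Perm X) x = (T.toEquiv ^ (-n)) x
      rw [← zpow_neg]
    rw [Equiv.invFun_as_coe, h]
    exact zIter_continuous T (-n)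

lemma zIterHomeo_apply {X : Type*} [TopologicalSpace X] (T : X ≃ₜ X) (n : ℤ) (x : X) :
    zIterHomeo T n x = zIter T n x := rfl

lemma zIter_comm_zIter {X : Type*} [TopologicalSpace X] (T : X ≃ₜ X) (n m : ℤ) (x : X) :
    zIter T n (zIter T m x) = zIter T m (zIter T n x) := by
  show (T.toEquiv ^ n) ((T.toEquiv ^ m) x) = (T.toEquiv ^ m) ((T.toEquiv ^ n) x)
  have : T.toEquiv ^ n * T.toEquiv ^ m = T.toEquiv ^ m * T.toEquiv ^ n := by
    rw [← zpow_add, ← zpow_add, add_comm]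
  exact congrFun (congrArg (fun (e : Equiv.Perm X) => (e : X → X)) this) x

/-- Equivariance of a factor map for all integer iterates. -/
lemma factor_zIter {X Y : Type*} [TopologicalSpace X] [TopologicalSpace Y]
    (T : X ≃ₜ X) (S : Y ≃ₜ Y) (f : X → Y) (hf : ∀ x, f (T x) = S (f x)) (n : ℤ) (x : X) :
    f (zIter T n x) = zIter S n (f x) := by
  have hsymm : ∀ x, f (T.symm x) = S.symm (f x) := by
    intro x
    have := hf (T.symm x)
    rw [T.apply_symm_apply] at this
    rw [this, S.symm_apply_apply]
  induction n using Int.induction_on with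
  | zero => rfl
  | succ k ih => rw [add_comm, zIter_one_add, zIter_one_add, hf, ih]
  | pred k ih =>
      have h : (-(k:ℤ) - 1) = -1 + (-(k:ℤ)) := by ring
      rw [h, zIter_neg_one_add, zIter_neg_one_add, hsymm, ih]

/-- zIter on a product homeomorphism. -/
lemma zIter_prodCongr {X Y : Type*} [TopologicalSpace X] [TopologicalSpace Y]
    (T : X ≃ₜ X) (S : Y ≃ₜ Y) (n : ℤ) (p : X × Y) :
    zIter (T.prodCongr S) n p = (zIter T n p.1, zIter S n p.2) := by
  induction n using Int.induction_on with
  | zero => rfl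
  | succ k ih =>
      rw [add_comm, zIter_one_add, ih, zIter_one_add, zIter_one_add]
      rfl
  | pred k ih =>
      have h : (-(k:ℤ) - 1) = -1 + (-(k:ℤ)) := by ring
      rw [h, zIter_neg_one_add, ih, zIter_neg_one_add, zIter_neg_one_add]
      rfl

/-- Pushing RP through a factor map between compact metric systems. -/
lemma RP_factor {X Y : Type*} [MetricSpace X] [CompactSpace X] [MetricSpace Y]
    [CompactSpace Y] (T : X ≃ₜ X) (S : Y ≃ₜ Y) (f : X → Y)
    (hcont : Continuous f) (hequi : ∀ x, f (T x) = S (f x))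
    {a b : X} (h : (a, b) ∈ RP T) : (f a, f b) ∈ RP S := by
  obtain ⟨u, v, n, hu, hv, hd⟩ := h
  refine ⟨f ∘ u, f ∘ v, n, (hcont.tendsto a).comp hu, (hcont.tendsto b).comp hv, ?_⟩
  have huc : UniformContinuous f := CompactSpace.uniformContinuous_of_continuous hcont
  rw [Metric.uniformContinuous_iff] at huc
  rw [Metric.tendsto_atTop] at hd ⊢
  intro ε hε
  obtain ⟨δ, hδ, hδ'⟩ := huc ε hε
  obtain ⟨N, hN⟩ := hd δ hδ
  refine ⟨N, fun i hi => ?_⟩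
  have h1 : dist (zIter T (n i) (u i)) (zIter T (n i) (v i)) < δ := by
    have := hN i hi
    rwa [Real.dist_eq, sub_zero, abs_of_nonneg dist_nonneg] at this
  have h2 := hδ' h1
  rw [factor_zIter T S f hequi, factor_zIter T S f hequi] at h2
  rw [Real.dist_eq, sub_zero, abs_of_nonneg dist_nonneg]
  exact h2

/-- Lemma A: a minimal point proximal to `p` lies in the closure of the orbit of `p`. -/
lemma minimal_point_mem_orbit_closure {Z : Type*} [MetricSpace Z] [CompactSpace Z]
    (R : Z ≃ₜ Z) {p q : Z}
    (hprox : ∀ ε > (0:ℝ), ∃ n : ℤ, dist (zIter R n p) (zIter R n q) < ε)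
    {M : Set Z} (hM : IsMinimalSubset R M) (hq : q ∈ M) :
    q ∈ closure (zOrbit R p) := by
  -- choose a sequence of times realizing proximality
  have hseq : ∀ i : ℕ, ∃ n : ℤ, dist (zIter R n p) (zIter R n q) < 1 / (i + 1) := by
    intro i
    exact hprox (1 / (i + 1)) (by positivity)
  choose n hn using hseq
  -- extract a convergent subsequence of the q-orbit
  obtain ⟨z, -, ψ, hψ, hz⟩ := isCompact_univ.tendsto_subseq
    (fun i => mem_univ (zIter R (n i) q))
  -- the p-orbit along the same times converges to z as well
  have hzp : Tendsto (fun i => zIter R (n (ψ i)) p) atTop (𝓝 z) := by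
    rw [Metric.tendsto_atTop] at hz ⊢
    intro ε hε
    obtain ⟨N₁, hN₁⟩ := hz (ε / 2) (by positivity)
    obtain ⟨N₂, hN₂⟩ := exists_nat_gt (2 / ε)
    refine ⟨max N₁ N₂, fun i hi => ?_⟩
    have hi₁ : i ≥ N₁ := le_trans (le_max_left _ _) hi
    have hi₂ : (N₂ : ℝ) ≤ ψ i := by
      have : N₂ ≤ i := le_trans (le_max_right _ _) hi
      exact_mod_cast le_trans this (hψ.le_apply)
    have hdq : dist (zIter R (n (ψ i)) q) z < ε / 2 := hN₁ i hi₁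
    have hdpq : dist (zIter R (n (ψ i)) p) (zIter R (n (ψ i)) q) < 1 / (ψ i + 1) :=
      hn (ψ i)
    have hlt : (1:ℝ) / (ψ i + 1) < ε / 2 := by
      rw [div_lt_iff₀ (by positivity)]
      have h2ε : 2 / ε < (ψ i : ℝ) + 1 := lt_of_lt_of_le (lt_of_lt_of_le hN₂ hi₂)
        (by linarith)
      calc (1:ℝ) = (2 / ε) * (ε / 2) := by field_simp
      _ < ((ψ i : ℝ) + 1) * (ε / 2) := by
          apply mul_lt_mul_of_pos_right h2ε (by positivity)
      _ = ε / 2 * ((ψ i : ℝ) + 1) := by ring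
    calc dist (zIter R (n (ψ i)) p) z
        ≤ dist (zIter R (n (ψ i)) p) (zIter R (n (ψ i)) q)
          + dist (zIter R (n (ψ i)) q) z := dist_triangle _ _ _
      _ < ε / 2 + ε / 2 := by linarith [lt_trans hdpq hlt]
      _ = ε := by ring
  -- z is in M and in the orbit closure of p
  have hzM : z ∈ M :=
    hM.2.1.mem_of_tendsto hz (Filter.Eventually.of_forall fun i =>
      zIter_mem_of_closed_inv R hM.2.2.1 hq (n (ψ i)))
  have hzp' : z ∈ closure (zOrbit R p) :=
    mem_closure_of_tendsto hzp (Filter.Eventually.of_forall fun i => ⟨n (ψ i), rfl⟩)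
  -- closure of orbit of z equals M, and is contained in closure of orbit of p
  have h1 : closure (zOrbit R z) = M := closure_zOrbit_eq_of_minimal R hM hzM
  have h2 : closure (zOrbit R z) ⊆ closure (zOrbit R p) :=
    zOrbit_subset_of_inv R isClosed_closure (image_closure_zOrbit R p) hzp'
  exact h2 (h1 ▸ hq)

/-- Density of minimal points in the product of two minimal systems. -/
lemma dense_minimal_points {X Y : Type*} [TopologicalSpace X] [CompactSpace X]
    [T2Space X] [TopologicalSpace Y] [CompactSpace Y] [T2Space Y]
    [Nonempty X] [Nonempty Y]
    (T : X ≃ₜ X) (S : Y ≃ₜ Y) (hX : IsMinimalSystem T) (hY : IsMinimalSystem S) :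
    Dense {p : X × Y | ∃ M, IsMinimalSubset (T.prodCongr S) M ∧ p ∈ M} := by
  obtain ⟨M, hM⟩ := exists_minimal_subset (T.prodCongr S)
  obtain ⟨⟨a, b⟩, hab⟩ := hM.1
  have hsub : zOrbit T a ×ˢ zOrbit S b ⊆
      {p : X × Y | ∃ M, IsMinimalSubset (T.prodCongr S) M ∧ p ∈ M} := by
    rintro ⟨x, y⟩ ⟨⟨i, hi⟩, ⟨j, hj⟩⟩
    refine ⟨(zIterHomeo T i).prodCongr (zIterHomeo S j) '' M,
      minimal_image (T.prodCongr S) _ ?_ hM, ⟨(a, b), hab, ?_⟩⟩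
    · rintro ⟨x', y'⟩
      refine Prod.ext ?_ ?_
      · exact zIter_comm T i x'
      · exact zIter_comm S j y'
    · show (zIter T i a, zIter S j b) = (x, y)
      rw [show zIter T i a = x from hi, show zIter S j b = y from hj]
  have hdense : Dense (zOrbit T a ×ˢ zOrbit S b) := (hX a).prod (hY b)
  exact hdense.mono hsub

/-- quasi-disjointness lifts through proximal extensions. -/
theorem stmt10 {X X' Y : Type*} [MetricSpace X] [CompactSpace X]
    [MetricSpace X'] [CompactSpace X'] [MetricSpace Y] [CompactSpace Y]
    (T : X ≃ₜ X) (T' : X' ≃ₜ X') (S : Y ≃ₜ Y)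
    (hX : IsMinimalSystem T) (hX' : IsMinimalSystem T') (hY : IsMinimalSystem S)
    (φ : X' → X) (hφ : IsFactorMap T' T φ)
    (hprox : ∀ x₁ x₂ : X', φ x₁ = φ x₂ → ProximalPair T' x₁ x₂)
    (hQD : QuasiDisjoint T S) :
    QuasiDisjoint T' S := by
  intro J' hJ' hFE
  obtain ⟨hcl, hinv, hfst, hsnd⟩ := hJ'
  rcases isEmpty_or_nonempty (X' × Y) with hemp | hne
  · ext p
    exact (IsEmpty.false p).elim
  have hNX' : Nonempty X' := ⟨hne.some.1⟩
  have hNY : Nonempty Y := ⟨hne.some.2⟩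
  obtain ⟨hφc, hφs, hφe⟩ := hφ
  set J : Set (X × Y) := (Prod.map φ id) '' J' with hJdef
  have hcomm : ∀ p : X' × Y, (T.prodCongr S) (Prod.map φ id p)
      = Prod.map φ id ((T'.prodCongr S) p) := by
    intro p
    exact Prod.ext (hφe p.1).symm rfl
  have hJoin : IsJoining T S J := by
    refine ⟨((hcl.isCompact).image ((hφc.prodMap continuous_id))).isClosed, ?_, ?_, ?_⟩
    · rw [hJdef, ← Set.image_comp]
      have : (⇑(T.prodCongr S) ∘ Prod.map φ id) = Prod.map φ id ∘ ⇑(T'.prodCongr S) := by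
        funext p; exact hcomm p
      rw [this, Set.image_comp, hinv]
    · have : Prod.fst ∘ (Prod.map φ id : X' × Y → X × Y) = φ ∘ Prod.fst := rfl
      rw [hJdef, ← Set.image_comp, this, Set.image_comp, hfst, Set.image_univ,
        hφs.range_eq]
    · have : Prod.snd ∘ (Prod.map φ id : X' × Y → X × Y) = Prod.snd := rfl
      rw [hJdef, ← Set.image_comp, this, hsnd]
  have hFEJ : FullEqProjection T S J := by
    intro x y
    obtain ⟨x', rfl⟩ := hφs x
    obtain ⟨p, hp, h1, h2⟩ := hFE x' y
    exact ⟨(φ p.1, p.2), ⟨p, hp, rfl⟩, RP_factor T' T φ hφc hφe h1, h2⟩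
  have hJuniv : J = Set.univ := hQD J hJoin hFEJ
  -- minimal points of the product lie in J'
  have hmin_sub : {p : X' × Y | ∃ M, IsMinimalSubset (T'.prodCongr S) M ∧ p ∈ M} ⊆ J' := by
    rintro ⟨a, b⟩ ⟨M, hM, habM⟩
    have hmem : (φ a, b) ∈ J := hJuniv ▸ mem_univ _
    obtain ⟨⟨a'', b''⟩, hq, heq⟩ := hmem
    have hb : b'' = b := congrArg Prod.snd heq
    have ha : φ a'' = φ a := congrArg Prod.fst heq
    subst hb
    -- (a'', b'') and (a, b) are proximal in the product
    have hpq : ∀ ε > (0:ℝ), ∃ n : ℤ,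
        dist (zIter (T'.prodCongr S) n (a'', b'')) (zIter (T'.prodCongr S) n (a, b'')) < ε := by
      intro ε hε
      obtain ⟨n, hn⟩ := hprox a'' a ha ε hε
      refine ⟨n, ?_⟩
      rw [zIter_prodCongr, zIter_prodCongr]
      have : dist ((zIter T' n a'', zIter S n b'') : X' × Y) (zIter T' n a, zIter S n b'')
          = dist (zIter T' n a'') (zIter T' n a) := by
        rw [Prod.dist_eq]
        simp [max_eq_left dist_nonneg]
      rw [this]
      exact hn
    have hcap := minimal_point_mem_orbit_closure (T'.prodCongr S) hpq hM habM
    exact zOrbit_subset_of_inv (T'.prodCongr S) hcl hinv hq hcap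
  have hdense : Dense J' :=
    Dense.mono hmin_sub (dense_minimal_points T' S hX' hY)
  rw [← hcl.closure_eq, hdense.closure_eq]
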